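/- For γ, N ∈ [0,1], define the generalized amplitude damping channel A_{γ,N}(ρ) := Σ_{i=1}^4 A_i ρ A_i† on M₂, with Kraus operators A₁ := √(1−N)·(|0⟩⟨0| + √(1−γ)·|1⟩⟨1|), A₂ := √(γ(1−N))·|0⟩⟨1|, A₃ := √N·(√(1−γ)·|0⟩⟨0| + |1⟩⟨1|), and A₄ := √(γN)·|1⟩⟨0|. Let Φ be the qubit maximally entangled state on ℂ²⊗ℂ². Then Tr[(Φ⊗Φ)·(A_{γ,N}⊗A_{γ,N}⊗A_{γ,N}⊗A_{γ,N})(Φ⊗Φ)] = (1 + (γ/2)·(γ − 2·(1 + γN(1−N))))², where Φ⊗Φ is regarded as a state on (ℂ²)^{⊗4} with the maximally entangled pairs on factors (1,2) and (3,4), and A_{γ,N}⊗A_{γ,N}⊗A_{γ,N}⊗A_{γ,N} denotes the channel acting as A_{γ,N} independently on each of the four qubit factors. -/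

import Mathlib

open Matrix Kronecker
open scoped ComplexOrder

noncomputable section

/-- The positive semidefinite square root of a positive semidefinite matrix
(Mathlib's former `Matrix.PosSemidef.sqrt`, with its former definition). -/
def Matrix.PosSemidef.sqrt {n 𝕜 : Type*} [Fintype n] [DecidableEq n] [RCLike 𝕜]
    {A : Matrix n n 𝕜} (hA : A.PosSemidef) : Matrix n n 𝕜 :=
  hA.1.eigenvectorUnitary.1 * diagonal ((↑) ∘ (√·) ∘ hA.1.eigenvalues) *
    (star hA.1.eigenvectorUnitary : Matrix n n 𝕜)

/-- The trace norm `‖X‖₁ = Tr[√(X†X)]`. -/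
def traceNorm {n : Type*} [Fintype n] [DecidableEq n] (X : Matrix n n ℂ) : ℝ :=
  ((Matrix.posSemidef_conjTranspose_mul_self X).sqrt.trace).re

/-- The extension `id_k ⊗ Φ` of a map on matrices, with the identity on the first factor. -/
def idTensor {k n m : Type*} (Φ : Matrix n n ℂ → Matrix m m ℂ)
    (M : Matrix (k × n) (k × n) ℂ) : Matrix (k × m) (k × m) ℂ :=
  Matrix.of fun p q => Φ (Matrix.of fun a b => M (p.1, a) (q.1, b)) p.2 q.2

/-- A density matrix: positive semidefinite with unit trace. -/
def IsState {n : Type*} [Fintype n] (ρ : Matrix n n ℂ) : Prop :=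
  ρ.PosSemidef ∧ ρ.trace = 1

/-- Normalized diamond distance between two maps on matrices, as the supremum over
bipartite input states (with a reference system of the same dimension as the input)
of the normalized trace distance of the outputs. -/
def dDist {n m : Type*} [Fintype n] [DecidableEq n] [Fintype m] [DecidableEq m]
    (N M : Matrix n n ℂ → Matrix m m ℂ) : ℝ :=
  sSup {x : ℝ | ∃ ρ : Matrix (n × n) (n × n) ℂ, IsState ρ ∧
    x = (1 / 2) * traceNorm (idTensor N ρ - idTensor M ρ)}

/-- Complete positivity of a linear map on matrices: every finite identity extension
preserves positive semidefiniteness. -/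
def IsCP {n m : Type*} [Fintype n] [DecidableEq n] [Fintype m] [DecidableEq m]
    (Φ : Matrix n n ℂ →ₗ[ℂ] Matrix m m ℂ) : Prop :=
  ∀ (r : ℕ) (M : Matrix (Fin r × n) (Fin r × n) ℂ), M.PosSemidef →
    (idTensor (fun X => Φ X) M).PosSemidef

/-- Trace preservation of a linear map on matrices. -/
def IsTP {n m : Type*} [Fintype n] [Fintype m]
    (Φ : Matrix n n ℂ →ₗ[ℂ] Matrix m m ℂ) : Prop :=
  ∀ X, (Φ X).trace = X.trace

/-- Choi operator of a map on matrices: `Γ^Φ = Σ_{i,j} |i⟩⟨j| ⊗ Φ(|i⟩⟨j|)`. -/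
def choi {n m : Type*} [DecidableEq n]
    (Φ : Matrix n n ℂ → Matrix m m ℂ) : Matrix (n × m) (n × m) ℂ :=
  Matrix.of fun p q => Φ (Matrix.single p.1 q.1 1) p.2 q.2

/-- The swap operator `F = Σ_{i,j} |i⟩⟨j| ⊗ |j⟩⟨i|` on `ℂ^d ⊗ ℂ^d`. -/
def swapOp (d : ℕ) : Matrix (Fin d × Fin d) (Fin d × Fin d) ℂ :=
  Matrix.of fun p q => if p.1 = q.2 ∧ p.2 = q.1 then 1 else 0

/-- The swap channel `S^d(X) = F X F†`. -/
def swapCh (d : ℕ) (X : Matrix (Fin d × Fin d) (Fin d × Fin d) ℂ) :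
    Matrix (Fin d × Fin d) (Fin d × Fin d) ℂ :=
  swapOp d * X * (swapOp d)ᴴ

/-- Square root of a positive semidefinite matrix (junk value `0` otherwise). -/
def msqrt {n : Type*} [Fintype n] [DecidableEq n] (X : Matrix n n ℂ) : Matrix n n ℂ :=
  letI := Classical.propDecidable X.PosSemidef
  if h : X.PosSemidef then h.sqrt else 0

/-- Fidelity `F(ω,τ) = ‖√ω √τ‖₁²`. -/
def fid {n : Type*} [Fintype n] [DecidableEq n] (ω τ : Matrix n n ℂ) : ℝ :=
  (traceNorm (msqrt ω * msqrt τ)) ^ 2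

/-- Channel fidelity: the infimum of output fidelities over bipartite input states. -/
def cFid {n m : Type*} [Fintype n] [DecidableEq n] [Fintype m] [DecidableEq m]
    (N M : Matrix n n ℂ → Matrix m m ℂ) : ℝ :=
  sInf {x : ℝ | ∃ ρ : Matrix (n × n) (n × n) ℂ, IsState ρ ∧
    x = fid (idTensor N ρ) (idTensor M ρ)}

/-- Partial trace over the second (right) factor. -/
def ptrR {a b : Type*} [Fintype b] (X : Matrix (a × b) (a × b) ℂ) : Matrix a a ℂ :=
  Matrix.of fun i j => ∑ k, X (i, k) (j, k)

/-- Unnormalized maximally entangled operator `Γ = |Γ⟩⟨Γ|` on `ℂ^D ⊗ ℂ^D`. -/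
def gamOp (D : ℕ) : Matrix (Fin D × Fin D) (Fin D × Fin D) ℂ :=
  Matrix.of fun p q => if p.1 = p.2 ∧ q.1 = q.2 then 1 else 0

/-- Maximally entangled state `Φ = Γ/D` on `ℂ^D ⊗ ℂ^D`. -/
def phiD (D : ℕ) : Matrix (Fin D × Fin D) (Fin D × Fin D) ℂ :=
  ((D : ℂ))⁻¹ • gamOp D

/-- Partial transpose over Bob's factors `B, B̂, B'` of a matrix on the six factors
`(A ⊗ B) ⊗ (Â ⊗ B̂) ⊗ (A' ⊗ B')`. -/
def ptB6 {A B AH BH A' B' : Type*}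
    (X : Matrix (((A × B) × (AH × BH)) × (A' × B')) (((A × B) × (AH × BH)) × (A' × B')) ℂ) :
    Matrix (((A × B) × (AH × BH)) × (A' × B')) (((A × B) × (AH × BH)) × (A' × B')) ℂ :=
  Matrix.of fun p q =>
    X (((p.1.1.1, q.1.1.2), (p.1.2.1, q.1.2.2)), (p.2.1, q.2.2))
      (((q.1.1.1, p.1.1.2), (q.1.2.1, p.1.2.2)), (q.2.1, p.2.2))

/-- Partial transpose over the factor `B̂` of a matrix on `Â ⊗ B̂`. -/
def ptBh2 {AH BH : Type*} (X : Matrix (AH × BH) (AH × BH) ℂ) : Matrix (AH × BH) (AH × BH) ℂ :=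
  Matrix.of fun g g' => X (g.1, g'.2) (g'.1, g.2)

/-- Contraction `Tr_{ÂB̂}[(T_{ÂB̂}(ρ) ⊗ I) P]` of a six-factor operator with a resource state,
yielding the Choi operator of the induced channel `ω ↦ P(ω ⊗ ρ)`. -/
def contractRes {A B AH BH A' B' : Type*} [Fintype AH] [Fintype BH]
    (ρ : Matrix (AH × BH) (AH × BH) ℂ)
    (P : Matrix (((A × B) × (AH × BH)) × (A' × B')) (((A × B) × (AH × BH)) × (A' × B')) ℂ) :
    Matrix ((A × B) × (A' × B')) ((A × B) × (A' × B')) ℂ :=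
  Matrix.of fun p q => ∑ h, ∑ h', ρ h h' * P ((p.1, h), p.2) ((q.1, h'), q.2)


/-- The qubit maximally entangled state `Φ = Γ/2`. -/
def phiQ : Matrix (Fin 2 × Fin 2) (Fin 2 × Fin 2) ℂ := (2 : ℂ)⁻¹ • gamOp 2

/-- `|i⟩⟨j|` on a qubit. -/
def ketbra (i j : Fin 2) : Matrix (Fin 2) (Fin 2) ℂ := Matrix.single i j 1

/-- Kraus operators of the generalized amplitude damping channel. -/
def gadcKraus (γ N : ℝ) : Fin 4 → Matrix (Fin 2) (Fin 2) ℂ :=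
  ![(Real.sqrt (1 - N) : ℂ) • (ketbra 0 0 + (Real.sqrt (1 - γ) : ℂ) • ketbra 1 1),
    (Real.sqrt (γ * (1 - N)) : ℂ) • ketbra 0 1,
    (Real.sqrt N : ℂ) • ((Real.sqrt (1 - γ) : ℂ) • ketbra 0 0 + ketbra 1 1),
    (Real.sqrt (γ * N) : ℂ) • ketbra 1 0]

/-- The generalized amplitude damping channel `A_{γ,N}(ρ) = Σ_i A_i ρ A_i†`. -/
def gadc (γ N : ℝ) (ρ : Matrix (Fin 2) (Fin 2) ℂ) : Matrix (Fin 2) (Fin 2) ℂ :=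
  ∑ i : Fin 4, gadcKraus γ N i * ρ * (gadcKraus γ N i)ᴴ

/-- The channel `A_{γ,N} ⊗ A_{γ,N} ⊗ A_{γ,N} ⊗ A_{γ,N}` acting independently on each of
the four qubit factors, given by the tensor products of the Kraus operators. -/
def gadc4 (γ N : ℝ)
    (X : Matrix (Fin 2 × Fin 2 × Fin 2 × Fin 2) (Fin 2 × Fin 2 × Fin 2 × Fin 2) ℂ) :
    Matrix (Fin 2 × Fin 2 × Fin 2 × Fin 2) (Fin 2 × Fin 2 × Fin 2 × Fin 2) ℂ :=
  ∑ i : Fin 4 × Fin 4 × Fin 4 × Fin 4,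
    (gadcKraus γ N i.1 ⊗ₖ (gadcKraus γ N i.2.1 ⊗ₖ (gadcKraus γ N i.2.2.1 ⊗ₖ
      gadcKraus γ N i.2.2.2))) * X *
    (gadcKraus γ N i.1 ⊗ₖ (gadcKraus γ N i.2.1 ⊗ₖ (gadcKraus γ N i.2.2.1 ⊗ₖ
      gadcKraus γ N i.2.2.2)))ᴴ

/-- `Φ ⊗ Φ` on `(ℂ²)^{⊗4}`, with the maximally entangled pairs on factors `(1,2)`
and `(3,4)`. -/
def phiPhi : Matrix (Fin 2 × Fin 2 × Fin 2 × Fin 2) (Fin 2 × Fin 2 × Fin 2 × Fin 2) ℂ :=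
  Matrix.of fun r c =>
    phiQ (r.1, r.2.1) (c.1, c.2.1) * phiQ (r.2.2.1, r.2.2.2) (c.2.2.1, c.2.2.2)

set_option maxRecDepth 100000
set_option maxHeartbeats 4000000

-- auxiliary
def sig : (Fin 2 × Fin 2) × (Fin 2 × Fin 2) ≃ Fin 2 × Fin 2 × Fin 2 × Fin 2 :=
  Equiv.prodAssoc _ _ _

lemma kron_conjTranspose {m n p q : Type*} (A : Matrix m n ℂ) (B : Matrix p q ℂ) :
    (A ⊗ₖ B)ᴴ = Aᴴ ⊗ₖ Bᴴ := by
  ext ⟨i,j⟩ ⟨k,l⟩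
  simp [conjTranspose_apply, kroneckerMap_apply, mul_comm]

lemma phiPhi_eq : phiPhi = (phiQ ⊗ₖ phiQ).submatrix sig.symm sig.symm := by
  ext ⟨a,b,c,d⟩ ⟨a',b',c',d'⟩
  simp [phiPhi, sig, kroneckerMap_apply, Equiv.prodAssoc]

def g2 (γ N : ℝ) : Matrix ((Fin 2 × Fin 2)) ((Fin 2 × Fin 2)) ℂ :=
  ∑ i : Fin 4 × Fin 4, (gadcKraus γ N i.1 ⊗ₖ gadcKraus γ N i.2) * phiQ *
    (gadcKraus γ N i.1 ⊗ₖ gadcKraus γ N i.2)ᴴ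

lemma sum_kron_sum {ι κ m n : Type*} [Fintype ι] [Fintype κ]
    (f : ι → Matrix m m ℂ) (g : κ → Matrix n n ℂ) :
    ∑ i : ι × κ, f i.1 ⊗ₖ g i.2 = (∑ i, f i) ⊗ₖ (∑ j, g j) := by
  ext ⟨a,b⟩ ⟨c,d⟩
  simp only [Matrix.sum_apply, kroneckerMap_apply, Fintype.sum_prod_type, Finset.sum_mul,
    Finset.mul_sum]
  rw [Finset.sum_comm]

lemma kron_fact (γ N : ℝ) (i j k l : Fin 4) :
    (gadcKraus γ N i ⊗ₖ (gadcKraus γ N j ⊗ₖ (gadcKraus γ N k ⊗ₖ gadcKraus γ N l))) *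
      (phiQ ⊗ₖ phiQ).submatrix sig.symm sig.symm *
      (gadcKraus γ N i ⊗ₖ (gadcKraus γ N j ⊗ₖ (gadcKraus γ N k ⊗ₖ gadcKraus γ N l)))ᴴ
    = (((gadcKraus γ N i ⊗ₖ gadcKraus γ N j) * phiQ * (gadcKraus γ N i ⊗ₖ gadcKraus γ N j)ᴴ)
        ⊗ₖ ((gadcKraus γ N k ⊗ₖ gadcKraus γ N l) * phiQ *
            (gadcKraus γ N k ⊗ₖ gadcKraus γ N l)ᴴ)).submatrix sig.symm sig.symm := by
  have key : (gadcKraus γ N i ⊗ₖ (gadcKraus γ N j ⊗ₖ (gadcKraus γ N k ⊗ₖ gadcKraus γ N l)))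
      = ((gadcKraus γ N i ⊗ₖ gadcKraus γ N j) ⊗ₖ
          (gadcKraus γ N k ⊗ₖ gadcKraus γ N l)).submatrix sig.symm sig.symm := by
    simp only [sig]
    exact (kronecker_assoc' (gadcKraus γ N i) (gadcKraus γ N j)
      (gadcKraus γ N k ⊗ₖ gadcKraus γ N l)).symm
  rw [key, conjTranspose_submatrix, submatrix_mul_equiv, submatrix_mul_equiv]
  rw [mul_kronecker_mul, kron_conjTranspose, mul_kronecker_mul]

lemma gadc4_phiPhi (γ N : ℝ) :
    gadc4 γ N phiPhi = (g2 γ N ⊗ₖ g2 γ N).submatrix sig.symm sig.symm := by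
  unfold gadc4
  rw [phiPhi_eq]
  rw [Finset.sum_congr rfl (fun i _ => kron_fact γ N i.1 i.2.1 i.2.2.1 i.2.2.2)]
  have pull : ∑ i : Fin 4 × Fin 4 × Fin 4 × Fin 4,
      (((gadcKraus γ N i.1 ⊗ₖ gadcKraus γ N i.2.1) * phiQ * (gadcKraus γ N i.1 ⊗ₖ gadcKraus γ N i.2.1)ᴴ)
        ⊗ₖ ((gadcKraus γ N i.2.2.1 ⊗ₖ gadcKraus γ N i.2.2.2) * phiQ *
            (gadcKraus γ N i.2.2.1 ⊗ₖ gadcKraus γ N i.2.2.2)ᴴ)).submatrix sig.symm sig.symm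
      = (∑ i : Fin 4 × Fin 4 × Fin 4 × Fin 4,
          (((gadcKraus γ N i.1 ⊗ₖ gadcKraus γ N i.2.1) * phiQ * (gadcKraus γ N i.1 ⊗ₖ gadcKraus γ N i.2.1)ᴴ)
            ⊗ₖ ((gadcKraus γ N i.2.2.1 ⊗ₖ gadcKraus γ N i.2.2.2) * phiQ *
                (gadcKraus γ N i.2.2.1 ⊗ₖ gadcKraus γ N i.2.2.2)ᴴ))).submatrix sig.symm sig.symm := by
    ext p q
    simp [Matrix.sum_apply]
  rw [pull]
  refine congrArg (fun M : Matrix ((Fin 2 × Fin 2) × (Fin 2 × Fin 2)) ((Fin 2 × Fin 2) × (Fin 2 × Fin 2)) ℂ => M.submatrix (⇑sig.symm) (⇑sig.symm)) ?_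
  have h2 := sum_kron_sum
    (fun a : Fin 4 × Fin 4 => (gadcKraus γ N a.1 ⊗ₖ gadcKraus γ N a.2) * phiQ *
      (gadcKraus γ N a.1 ⊗ₖ gadcKraus γ N a.2)ᴴ)
    (fun a : Fin 4 × Fin 4 => (gadcKraus γ N a.1 ⊗ₖ gadcKraus γ N a.2) * phiQ *
      (gadcKraus γ N a.1 ⊗ₖ gadcKraus γ N a.2)ᴴ)
  unfold g2
  exact (Fintype.sum_equiv (Equiv.prodAssoc (Fin 4) (Fin 4) (Fin 4 × Fin 4)).symm _ _
    (fun x => rfl)).trans h2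

lemma t_eval (γ N : ℝ) (hγ0 : 0 ≤ γ) (hγ1 : γ ≤ 1) (hN0 : 0 ≤ N) (hN1 : N ≤ 1) :
    (phiQ * g2 γ N).trace = ((1 + (γ/2) * (γ - 2*(1+γ*N*(1-N))) : ℝ) : ℂ) := by
  simp [trace, g2, Matrix.sum_apply, Matrix.mul_apply, conjTranspose_apply, phiQ, gamOp,
    gadcKraus, ketbra, Matrix.single, Fintype.sum_prod_type, Fin.sum_univ_two,
    Fin.sum_univ_four, kroneckerMap_apply, Complex.star_def, _root_.map_mul]
  ring_nf
  have p2 : ∀ x : ℝ, 0 ≤ x → ((Real.sqrt x : ℂ))^2 = ((x : ℝ) : ℂ) := fun x hx => by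
    rw [← Complex.ofReal_pow, Real.sq_sqrt hx]
  have p4 : ∀ x : ℝ, 0 ≤ x → ((Real.sqrt x : ℂ))^4 = (((x^2 : ℝ)) : ℂ) := fun x hx => by
    rw [show (4:ℕ) = 2*2 from rfl, pow_mul, p2 x hx, ← Complex.ofReal_pow]
  rw [p2 _ (by linarith : (0:ℝ) ≤ 1 - N), p2 _ hN0, p2 _ (by linarith : (0:ℝ) ≤ 1 - γ),
    p4 _ (by linarith : (0:ℝ) ≤ 1 - N), p4 _ hN0, p4 _ (by linarith : (0:ℝ) ≤ 1 - γ),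
    p4 _ (by nlinarith : (0:ℝ) ≤ -(N*γ) + γ), p4 _ (by positivity : (0:ℝ) ≤ N*γ)]
  push_cast
  ring


lemma trace_submatrix_sig (A : Matrix ((Fin 2 × Fin 2) × (Fin 2 × Fin 2))
    ((Fin 2 × Fin 2) × (Fin 2 × Fin 2)) ℂ) :
    (A.submatrix ⇑sig.symm ⇑sig.symm).trace = A.trace := by
  simp only [Matrix.trace, Matrix.diag, submatrix_apply]
  exact Equiv.sum_comp sig.symm (fun j => A j j)


/-- the overlap of `Φ ⊗ Φ` with its image under four independent copies of
the generalized amplitude damping channel. -/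
theorem stmt18 (γ N : ℝ) (hγ : γ ∈ Set.Icc (0 : ℝ) 1) (hN : N ∈ Set.Icc (0 : ℝ) 1) :
    (phiPhi * gadc4 γ N phiPhi).trace
      = (((1 + (γ / 2) * (γ - 2 * (1 + γ * N * (1 - N)))) ^ 2 : ℝ) : ℂ) := by
  obtain ⟨hγ0, hγ1⟩ := hγ
  obtain ⟨hN0, hN1⟩ := hN
  rw [gadc4_phiPhi, phiPhi_eq, submatrix_mul_equiv, trace_submatrix_sig,
    ← mul_kronecker_mul, trace_kronecker, t_eval γ N hγ0 hγ1 hN0 hN1]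
  push_cast
  ring

end
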